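/- arXiv:1302.4303 — 2 statements merged into one kernel-verified Lean document; each statement's English description precedes it below -/
import Mathlib

section
/- Let K be an algebraically closed field complete with respect to a non-trivial absolute value |·|. Let F be a nondegenerate homogeneous polynomial pair over K of degree d ≥ 2. Then the sequence of functions p ↦ d^{−n}·log‖F^{∘n}(p)‖ converges uniformly on K² ∖ {(0,0)} as n → ∞; the limit function g_F satisfies g_F(F(p)) = d·g_F(p) for all p ∈ K² ∖ {(0,0)}, g_F(c·p) = g_F(p) + log|c| for all c ∈ K ∖ {0} and p ∈ K² ∖ {(0,0)}, and sup_{p ∈ K²∖{(0,0)}} |g_F(p) − log‖p‖| < ∞. -/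
open MvPolynomial Filter Topology

/-- The evaluation self-map of `K²` induced by a pair of two-variable polynomials. -/
noncomputable def evalPair {K : Type*} [Field K] (F₀ F₁ : MvPolynomial (Fin 2) K) :
    (Fin 2 → K) → (Fin 2 → K) :=
  fun p => ![MvPolynomial.eval p F₀, MvPolynomial.eval p F₁]

/-- The sup norm on `K²`. -/
noncomputable def supNorm {K : Type*} [NormedField K] (p : Fin 2 → K) : ℝ :=
  max ‖p 0‖ ‖p 1‖

section helpers
variable {K : Type*} [NormedField K]

lemma supNorm_nonneg (p : Fin 2 → K) : 0 ≤ supNorm p :=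
  le_trans (norm_nonneg _) (le_max_left _ _)

lemma apply_le_supNorm (p : Fin 2 → K) (i : Fin 2) : ‖p i‖ ≤ supNorm p := by
  fin_cases i
  · exact le_max_left _ _
  · exact le_max_right _ _

lemma supNorm_pos {p : Fin 2 → K} (hp : p ≠ 0) : 0 < supNorm p := by
  rcases Function.ne_iff.mp hp with ⟨i, hi⟩
  calc 0 < ‖p i‖ := norm_pos_iff.mpr hi
    _ ≤ supNorm p := apply_le_supNorm p i

lemma supNorm_smul (c : K) (p : Fin 2 → K) : supNorm (c • p) = ‖c‖ * supNorm p := by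
  simp only [supNorm, Pi.smul_apply, smul_eq_mul, norm_mul]
  exact (mul_max_of_nonneg _ _ (norm_nonneg c)).symm

lemma degree_sum_eq {φ : MvPolynomial (Fin 2) K} {m : ℕ} (hφ : φ.IsHomogeneous m)
    {s : Fin 2 →₀ ℕ} (hs : s ∈ φ.support) : ∑ i : Fin 2, s i = m := by
  have h1 : (Finsupp.weight 1) s = m := hφ (mem_support_iff.mp hs)
  simp only [Finsupp.weight_apply, Finsupp.sum, Pi.one_apply, smul_eq_mul, mul_one] at h1
  rw [← h1]
  exact (Finset.sum_subset (Finset.subset_univ s.support)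
    (fun i _ hi => Finsupp.notMem_support_iff.mp hi)).symm

lemma eval_smul_homog {φ : MvPolynomial (Fin 2) K} {m : ℕ} (hφ : φ.IsHomogeneous m)
    (c : K) (p : Fin 2 → K) : eval (c • p) φ = c ^ m * eval p φ := by
  rw [eval_eq', eval_eq', Finset.mul_sum]
  refine Finset.sum_congr rfl fun s hs => ?_
  have : ∏ i : Fin 2, (c • p) i ^ s i = c ^ m * ∏ i : Fin 2, p i ^ s i := by
    simp only [Pi.smul_apply, smul_eq_mul, mul_pow]
    rw [Finset.prod_mul_distrib, Finset.prod_pow_eq_pow_sum, degree_sum_eq hφ hs]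
  rw [this]; ring

lemma norm_eval_le_homog {φ : MvPolynomial (Fin 2) K} {m : ℕ} (hφ : φ.IsHomogeneous m)
    (p : Fin 2 → K) :
    ‖eval p φ‖ ≤ (∑ s ∈ φ.support, ‖φ.coeff s‖) * supNorm p ^ m := by
  rw [eval_eq', Finset.sum_mul]
  refine (norm_sum_le _ _).trans (Finset.sum_le_sum fun s hs => ?_)
  rw [norm_mul]
  refine mul_le_mul_of_nonneg_left ?_ (norm_nonneg _)
  calc ‖∏ i : Fin 2, p i ^ s i‖ = ∏ i : Fin 2, ‖p i‖ ^ s i := by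
        rw [norm_prod]; exact Finset.prod_congr rfl fun i _ => norm_pow _ _
    _ ≤ ∏ i : Fin 2, supNorm p ^ s i :=
        Finset.prod_le_prod (fun i _ => pow_nonneg (norm_nonneg _) _)
          (fun i _ => pow_le_pow_left₀ (norm_nonneg _) (apply_le_supNorm p i) _)
    _ = supNorm p ^ m := by rw [Finset.prod_pow_eq_pow_sum, degree_sum_eq hφ hs]

lemma norm_eval_le_of_le_one {φ : MvPolynomial (Fin 2) K} {p : Fin 2 → K}
    (hp : ∀ i, ‖p i‖ ≤ 1) : ‖eval p φ‖ ≤ ∑ s ∈ φ.support, ‖φ.coeff s‖ := by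
  rw [eval_eq']
  refine (norm_sum_le _ _).trans (Finset.sum_le_sum fun s _ => ?_)
  rw [norm_mul]
  nth_rewrite 2 [← mul_one ‖φ.coeff s‖]
  refine mul_le_mul_of_nonneg_left ?_ (norm_nonneg _)
  calc ‖∏ i : Fin 2, p i ^ s i‖ = ∏ i : Fin 2, ‖p i‖ ^ s i := by
        rw [norm_prod]; exact Finset.prod_congr rfl fun i _ => norm_pow _ _
    _ ≤ ∏ i : Fin 2, (1:ℝ) ^ s i :=
        Finset.prod_le_prod (fun i _ => pow_nonneg (norm_nonneg _) _)
          (fun i _ => pow_le_pow_left₀ (norm_nonneg _) (hp i) _)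
    _ = 1 := by simp

end helpers

section main
variable {K : Type*} [NontriviallyNormedField K]
  {d : ℕ} {F₀ F₁ : MvPolynomial (Fin 2) K}

/-- coefficient norm sum -/
noncomputable def coefSum (φ : MvPolynomial (Fin 2) K) : ℝ := ∑ s ∈ φ.support, ‖φ.coeff s‖

lemma coefSum_nonneg (φ : MvPolynomial (Fin 2) K) : 0 ≤ coefSum φ :=
  Finset.sum_nonneg fun _ _ => norm_nonneg _

lemma evalPair_zero (p : Fin 2 → K) : evalPair F₀ F₁ p 0 = eval p F₀ := rfl
lemma evalPair_one (p : Fin 2 → K) : evalPair F₀ F₁ p 1 = eval p F₁ := rfl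

lemma evalPair_ne_zero (hnd : ∀ p : Fin 2 → K, p ≠ 0 → ¬(eval p F₀ = 0 ∧ eval p F₁ = 0))
    {p : Fin 2 → K} (hp : p ≠ 0) : evalPair F₀ F₁ p ≠ 0 := by
  intro h
  exact hnd p hp ⟨by rw [← evalPair_zero (F₁ := F₁), h]; rfl,
    by rw [← evalPair_one (F₀ := F₀), h]; rfl⟩

lemma iterate_ne_zero (hnd : ∀ p : Fin 2 → K, p ≠ 0 → ¬(eval p F₀ = 0 ∧ eval p F₁ = 0))
    {p : Fin 2 → K} (hp : p ≠ 0) (n : ℕ) : (evalPair F₀ F₁)^[n] p ≠ 0 := by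
  induction n with
  | zero => exact hp
  | succ n ih => rw [Function.iterate_succ_apply']; exact evalPair_ne_zero hnd ih

lemma evalPair_smul (hF₀ : F₀.IsHomogeneous d) (hF₁ : F₁.IsHomogeneous d) (c : K)
    (p : Fin 2 → K) : evalPair F₀ F₁ (c • p) = c ^ d • evalPair F₀ F₁ p := by
  funext i
  fin_cases i
  · show eval (c • p) F₀ = c ^ d • evalPair F₀ F₁ p 0
    rw [eval_smul_homog hF₀, evalPair_zero, smul_eq_mul]
  · show eval (c • p) F₁ = c ^ d • evalPair F₀ F₁ p 1
    rw [eval_smul_homog hF₁, evalPair_one, smul_eq_mul]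

lemma iterate_smul (hF₀ : F₀.IsHomogeneous d) (hF₁ : F₁.IsHomogeneous d) (c : K)
    (p : Fin 2 → K) (n : ℕ) :
    (evalPair F₀ F₁)^[n] (c • p) = c ^ (d ^ n) • (evalPair F₀ F₁)^[n] p := by
  induction n generalizing c p with
  | zero => simp
  | succ n ih =>
    rw [Function.iterate_succ_apply, Function.iterate_succ_apply,
      evalPair_smul hF₀ hF₁, ih, ← pow_mul, ← pow_succ']

lemma supNorm_evalPair_le (hF₀ : F₀.IsHomogeneous d) (hF₁ : F₁.IsHomogeneous d)
    (p : Fin 2 → K) :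
    supNorm (evalPair F₀ F₁ p) ≤ max (coefSum F₀) (coefSum F₁) * supNorm p ^ d := by
  refine max_le ?_ ?_
  · calc ‖evalPair F₀ F₁ p 0‖ = ‖eval p F₀‖ := rfl
      _ ≤ coefSum F₀ * supNorm p ^ d := norm_eval_le_homog hF₀ p
      _ ≤ _ := mul_le_mul_of_nonneg_right (le_max_left _ _)
            (pow_nonneg (supNorm_nonneg _) _)
  · calc ‖evalPair F₀ F₁ p 1‖ = ‖eval p F₁‖ := rfl
      _ ≤ coefSum F₁ * supNorm p ^ d := norm_eval_le_homog hF₁ p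
      _ ≤ _ := mul_le_mul_of_nonneg_right (le_max_right _ _)
            (pow_nonneg (supNorm_nonneg _) _)

end main

section lower
variable {K : Type*} [NontriviallyNormedField K] [IsAlgClosed K]
  {d : ℕ} {F₀ F₁ : MvPolynomial (Fin 2) K}

lemma exists_nullstellensatz
    (hnd : ∀ p : Fin 2 → K, p ≠ 0 → ¬(eval p F₀ = 0 ∧ eval p F₁ = 0)) (i : Fin 2) :
    ∃ (N : ℕ) (A B : MvPolynomial (Fin 2) K), A * F₀ + B * F₁ = X i ^ N := by
  have hX : (X i : MvPolynomial (Fin 2) K) ∈ (Ideal.span {F₀, F₁}).radical := by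
    rw [← vanishingIdeal_zeroLocus_eq_radical (K := K), mem_vanishingIdeal_iff]
    intro x hx
    have hx0 : eval x F₀ = 0 :=
      (mem_zeroLocus_iff.mp hx) F₀ (Ideal.subset_span (by simp))
    have hx1 : eval x F₁ = 0 :=
      (mem_zeroLocus_iff.mp hx) F₁ (Ideal.subset_span (by simp))
    have hx' : x = 0 := by
      by_contra h
      exact hnd x h ⟨hx0, hx1⟩
    rw [aeval_X, hx']
    rfl
  obtain ⟨N, hN⟩ := Ideal.mem_radical_iff.mp hX
  obtain ⟨A, B, hAB⟩ := Ideal.mem_span_pair.mp hN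
  exact ⟨N, A, B, hAB⟩

lemma exists_lower_bound (hF₀ : F₀.IsHomogeneous d) (hF₁ : F₁.IsHomogeneous d)
    (hnd : ∀ p : Fin 2 → K, p ≠ 0 → ¬(eval p F₀ = 0 ∧ eval p F₁ = 0)) :
    ∃ c : ℝ, 0 < c ∧ ∀ p : Fin 2 → K, p ≠ 0 →
      c * supNorm p ^ d ≤ supNorm (evalPair F₀ F₁ p) := by
  obtain ⟨N₀, A₀, B₀, h₀⟩ := exists_nullstellensatz hnd 0
  obtain ⟨N₁, A₁, B₁, h₁⟩ := exists_nullstellensatz hnd 1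
  set C : ℝ := coefSum A₀ + coefSum B₀ + (coefSum A₁ + coefSum B₁) + 1 with hCdef
  have hC : 0 < C := by
    have := coefSum_nonneg A₀; have := coefSum_nonneg B₀
    have := coefSum_nonneg A₁; have := coefSum_nonneg B₁
    positivity
  refine ⟨C⁻¹, inv_pos.mpr hC, ?_⟩
  have key : ∀ (i : Fin 2) (N : ℕ) (A B : MvPolynomial (Fin 2) K),
      A * F₀ + B * F₁ = X i ^ N →
      coefSum A + coefSum B ≤ C →
      ∀ p : Fin 2 → K, p ≠ 0 → ‖p i‖ = supNorm p →
      C⁻¹ * supNorm p ^ d ≤ supNorm (evalPair F₀ F₁ p) := by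
    intro i N A B hAB hCle p hp hpi
    have hs : 0 < supNorm p := supNorm_pos hp
    have hc : p i ≠ 0 := by
      rw [← norm_pos_iff, hpi]; exact hs
    set q : Fin 2 → K := (p i)⁻¹ • p with hq
    have hq_le : ∀ j, ‖q j‖ ≤ 1 := by
      intro j
      rw [hq, Pi.smul_apply, smul_eq_mul, norm_mul, norm_inv, hpi]
      rw [inv_mul_le_iff₀ hs, mul_one]
      exact apply_le_supNorm p j
    have hqi : q i = 1 := by
      rw [hq, Pi.smul_apply, smul_eq_mul, inv_mul_cancel₀ hc]
    -- 1 ≤ C * supNorm (evalPair F₀ F₁ q)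
    have h1 : (1 : ℝ) ≤ C * supNorm (evalPair F₀ F₁ q) := by
      have heval : eval q (A * F₀ + B * F₁) = eval q A * eval q F₀ + eval q B * eval q F₁ := by
        simp [mul_comm]
      have hXN : eval q (A * F₀ + B * F₁) = 1 := by
        rw [hAB, map_pow, eval_X, hqi, one_pow]
      have hS0 : ‖eval q F₀‖ ≤ supNorm (evalPair F₀ F₁ q) :=
        apply_le_supNorm (evalPair F₀ F₁ q) 0
      have hS1 : ‖eval q F₁‖ ≤ supNorm (evalPair F₀ F₁ q) :=
        apply_le_supNorm (evalPair F₀ F₁ q) 1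
      calc (1 : ℝ) = ‖eval q (A * F₀ + B * F₁)‖ := by rw [hXN, norm_one]
        _ ≤ ‖eval q A * eval q F₀‖ + ‖eval q B * eval q F₁‖ := by
            rw [heval]; exact norm_add_le _ _
        _ ≤ coefSum A * supNorm (evalPair F₀ F₁ q) +
              coefSum B * supNorm (evalPair F₀ F₁ q) := by
            gcongr
            · rw [norm_mul]
              exact mul_le_mul (norm_eval_le_of_le_one hq_le) hS0 (norm_nonneg _)
                (coefSum_nonneg _)
            · rw [norm_mul]
              exact mul_le_mul (norm_eval_le_of_le_one hq_le) hS1 (norm_nonneg _)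
                (coefSum_nonneg _)
        _ = (coefSum A + coefSum B) * supNorm (evalPair F₀ F₁ q) := by ring
        _ ≤ C * supNorm (evalPair F₀ F₁ q) :=
            mul_le_mul_of_nonneg_right hCle (supNorm_nonneg _)
    have hSq : C⁻¹ ≤ supNorm (evalPair F₀ F₁ q) := by
      rw [inv_le_iff_one_le_mul₀ hC]
      linarith [h1]
    -- p = p i • q
    have hpq : p = p i • q := by
      rw [hq, smul_smul, mul_inv_cancel₀ hc, one_smul]
    calc C⁻¹ * supNorm p ^ d = ‖p i‖ ^ d * C⁻¹ := by rw [hpi]; ring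
      _ ≤ ‖p i‖ ^ d * supNorm (evalPair F₀ F₁ q) := by
          gcongr
      _ = supNorm (evalPair F₀ F₁ p) := by
          conv_rhs => rw [hpq, evalPair_smul hF₀ hF₁, supNorm_smul, norm_pow]
  intro p hp
  rcases le_total ‖p 0‖ ‖p 1‖ with h | h
  · refine key 1 N₁ A₁ B₁ h₁ ?_ p hp ?_
    · have := coefSum_nonneg A₀; have := coefSum_nonneg B₀; rw [hCdef]; linarith
    · exact (max_eq_right h).symm
  · refine key 0 N₀ A₀ B₀ h₀ ?_ p hp ?_
    · have := coefSum_nonneg A₁; have := coefSum_nonneg B₁; rw [hCdef]; linarith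
    · exact (max_eq_left h).symm

end lower

section estim
variable {K : Type*} [NontriviallyNormedField K] [IsAlgClosed K]
  {d : ℕ} {F₀ F₁ : MvPolynomial (Fin 2) K}

lemma key_estimate (hF₀ : F₀.IsHomogeneous d) (hF₁ : F₁.IsHomogeneous d)
    (hnd : ∀ p : Fin 2 → K, p ≠ 0 → ¬(eval p F₀ = 0 ∧ eval p F₁ = 0)) :
    ∃ B : ℝ, 0 ≤ B ∧ ∀ p : Fin 2 → K, p ≠ 0 →
      |Real.log (supNorm (evalPair F₀ F₁ p)) - d * Real.log (supNorm p)| ≤ B := by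
  obtain ⟨C₁, hC₁, hlow⟩ := exists_lower_bound hF₀ hF₁ hnd
  set C₂ : ℝ := max (max (coefSum F₀) (coefSum F₁)) 1 with hC₂def
  have hC₂ : 0 < C₂ := lt_of_lt_of_le one_pos (le_max_right _ _)
  refine ⟨max |Real.log C₁| |Real.log C₂|, le_trans (abs_nonneg _) (le_max_left _ _), ?_⟩
  intro p hp
  have hs : 0 < supNorm p := supNorm_pos hp
  have hS : 0 < supNorm (evalPair F₀ F₁ p) :=
    lt_of_lt_of_le (by positivity) (hlow p hp)
  have hsd : (0:ℝ) < supNorm p ^ d := by positivity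
  have hup : supNorm (evalPair F₀ F₁ p) ≤ C₂ * supNorm p ^ d :=
    le_trans (supNorm_evalPair_le hF₀ hF₁ p)
      (mul_le_mul_of_nonneg_right (le_max_left _ _) (le_of_lt hsd))
  have h1 : Real.log (supNorm (evalPair F₀ F₁ p)) ≤ Real.log C₂ + d * Real.log (supNorm p) := by
    calc Real.log (supNorm (evalPair F₀ F₁ p)) ≤ Real.log (C₂ * supNorm p ^ d) :=
          (Real.log_le_log_iff hS (by positivity)).mpr hup
      _ = Real.log C₂ + d * Real.log (supNorm p) := by
          rw [Real.log_mul (ne_of_gt hC₂) (ne_of_gt hsd), Real.log_pow]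
  have h2 : Real.log C₁ + d * Real.log (supNorm p) ≤ Real.log (supNorm (evalPair F₀ F₁ p)) := by
    calc Real.log C₁ + d * Real.log (supNorm p)
        = Real.log (C₁ * supNorm p ^ d) := by
          rw [Real.log_mul (ne_of_gt hC₁) (ne_of_gt hsd), Real.log_pow]
      _ ≤ Real.log (supNorm (evalPair F₀ F₁ p)) :=
          (Real.log_le_log_iff (by positivity) hS).mpr (hlow p hp)
  rw [abs_le]
  constructor
  · have : -|Real.log C₁| ≤ Real.log C₁ := neg_abs_le _
    have h3 : -|Real.log C₁| ≤ Real.log (supNorm (evalPair F₀ F₁ p)) - d * Real.log (supNorm p) := by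
      linarith
    exact le_trans (neg_le_neg (le_max_left _ _)) h3
  · have : Real.log C₂ ≤ |Real.log C₂| := le_abs_self _
    have h3 : Real.log (supNorm (evalPair F₀ F₁ p)) - d * Real.log (supNorm p) ≤ |Real.log C₂| := by
      linarith
    exact le_trans h3 (le_max_right _ _)

end estim


/-- Let `K` be an algebraically closed field, complete with respect to a non-trivial
absolute value, and let `F` be a nondegenerate homogeneous polynomial pair of degree
`d ≥ 2` over `K`.  Then `d^{-n}·log‖F^{∘n}(p)‖` converges uniformly on `K² ∖ {0}` to a
function `g_F` satisfying `g_F(F(p)) = d·g_F(p)`, `g_F(c·p) = g_F(p) + log|c|`, and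
`sup_{p ≠ 0} |g_F(p) − log‖p‖| < ∞`. -/
theorem stmt_4 (K : Type*) [NontriviallyNormedField K] [CompleteSpace K] [IsAlgClosed K]
    (d : ℕ) (hd : 2 ≤ d)
    (F₀ F₁ : MvPolynomial (Fin 2) K)
    (hF₀ : F₀.IsHomogeneous d) (hF₁ : F₁.IsHomogeneous d)
    (hnd : ∀ p : Fin 2 → K, p ≠ 0 → ¬(eval p F₀ = 0 ∧ eval p F₁ = 0)) :
    ∃ g : (Fin 2 → K) → ℝ,
      TendstoUniformlyOn
        (fun (n : ℕ) (p : Fin 2 → K) =>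
          ((d : ℝ) ^ n)⁻¹ * Real.log (supNorm ((evalPair F₀ F₁)^[n] p)))
        g atTop {p : Fin 2 → K | p ≠ 0} ∧
      (∀ p : Fin 2 → K, p ≠ 0 → g (evalPair F₀ F₁ p) = d * g p) ∧
      (∀ c : K, c ≠ 0 → ∀ p : Fin 2 → K, p ≠ 0 → g (c • p) = g p + Real.log ‖c‖) ∧
      (∃ M : ℝ, ∀ p : Fin 2 → K, p ≠ 0 → |g p - Real.log (supNorm p)| ≤ M) := by
  have hd1 : (1:ℝ) < (d:ℝ) := by exact_mod_cast lt_of_lt_of_le one_lt_two hd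
  have hd0 : (0:ℝ) < (d:ℝ) := lt_trans one_pos hd1
  have hdne : (d:ℝ) ≠ 0 := ne_of_gt hd0
  have hr0 : (0:ℝ) ≤ (d:ℝ)⁻¹ := by positivity
  have hr1 : (d:ℝ)⁻¹ < 1 := by
    rw [inv_lt_one_iff₀]; right; exact hd1
  obtain ⟨B, hB0, hB⟩ := key_estimate hF₀ hF₁ hnd
  set T := evalPair F₀ F₁ with hT
  set u : ℕ → (Fin 2 → K) → ℝ :=
    fun n p => ((d : ℝ) ^ n)⁻¹ * Real.log (supNorm (T^[n] p)) with hu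
  set v : ℕ → (Fin 2 → K) → ℝ := fun n p => u (n+1) p - u n p with hv
  set b : ℕ → ℝ := fun n => B * ((d:ℝ)⁻¹)^(n+1) with hb
  have hb_summ : Summable b := by
    have h1 : Summable (fun n : ℕ => ((d:ℝ)⁻¹)^(n+1)) := by
      have h2 := (summable_geometric_of_lt_one hr0 hr1).mul_left ((d:ℝ)⁻¹)
      refine h2.congr fun n => ?_
      rw [← pow_succ']
    exact h1.mul_left B
  have hvb : ∀ (n : ℕ) (p : Fin 2 → K), p ∈ {p : Fin 2 → K | p ≠ 0} → ‖v n p‖ ≤ b n := by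
    intro n p hp
    have hq : T^[n] p ≠ 0 := iterate_ne_zero hnd hp n
    have hpow : ((d:ℝ)^(n+1)) ≠ 0 := pow_ne_zero _ hdne
    have hRec : v n p = ((d:ℝ)^(n+1))⁻¹ *
        (Real.log (supNorm (T (T^[n] p))) - d * Real.log (supNorm (T^[n] p))) := by
      show u (n+1) p - u n p = _
      rw [hu]
      simp only
      rw [Function.iterate_succ_apply' T n p, pow_succ]
      field_simp
    rw [hRec, norm_mul, Real.norm_eq_abs, Real.norm_eq_abs,
      abs_of_pos (inv_pos.mpr (pow_pos hd0 (n+1)))]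
    have hkey := hB (T^[n] p) hq
    calc ((d:ℝ)^(n+1))⁻¹ *
          |Real.log (supNorm (T (T^[n] p))) - d * Real.log (supNorm (T^[n] p))|
        ≤ ((d:ℝ)^(n+1))⁻¹ * B := by gcongr
      _ = b n := by rw [hb]; simp only; rw [inv_pow]; ring
  set g : (Fin 2 → K) → ℝ := fun p => u 0 p + ∑' n, v n p with hg
  have htsum : TendstoUniformlyOn (fun N p => ∑ n ∈ Finset.range N, v n p)
      (fun p => ∑' n, v n p) atTop {p : Fin 2 → K | p ≠ 0} :=
    tendstoUniformlyOn_tsum_nat hb_summ hvb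
  have hconst : TendstoUniformlyOn (fun (_ : ℕ) p => u 0 p) (fun p => u 0 p)
      atTop {p : Fin 2 → K | p ≠ 0} :=
    fun s hs => Eventually.of_forall (fun n x _ => refl_mem_uniformity hs)
  have hTU : TendstoUniformlyOn u g atTop {p : Fin 2 → K | p ≠ 0} := by
    have h := hconst.add htsum
    refine h.congr (Eventually.of_forall fun N => ?_)
    intro p hp
    show u 0 p + ∑ n ∈ Finset.range N, v n p = u N p
    have hts := Finset.sum_range_sub (f := fun n => u n p) N
    rw [hv]
    simp only at hts ⊢
    rw [hts]
    ring
  have hpt : ∀ p : Fin 2 → K, p ≠ 0 → Tendsto (fun n => u n p) atTop (𝓝 (g p)) :=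
    fun p hp => hTU.tendsto_at hp
  refine ⟨g, hTU, ?_, ?_, ?_⟩
  · -- g (F p) = d * g p
    intro p hp
    have hTp : T p ≠ 0 := evalPair_ne_zero hnd hp
    have h2 : ∀ n, u n (T p) = d * u (n+1) p := by
      intro n
      show ((d:ℝ)^n)⁻¹ * Real.log (supNorm (T^[n] (T p))) =
        (d:ℝ) * (((d:ℝ)^(n+1))⁻¹ * Real.log (supNorm (T^[n+1] p)))
      rw [← Function.iterate_succ_apply T n p, pow_succ]
      field_simp
    have h3 := hpt (T p) hTp
    simp_rw [h2] at h3
    exact tendsto_nhds_unique h3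
      (((hpt p hp).comp (tendsto_add_atTop_nat 1)).const_mul (d:ℝ))
  · -- g (c • p) = g p + log ‖c‖
    intro c hc p hp
    have hcp : c • p ≠ 0 := smul_ne_zero hc hp
    have h2 : ∀ n, u n (c • p) = u n p + Real.log ‖c‖ := by
      intro n
      have hpow : ((d:ℝ)^n) ≠ 0 := pow_ne_zero _ hdne
      show ((d:ℝ)^n)⁻¹ * Real.log (supNorm (T^[n] (c • p))) =
        ((d:ℝ)^n)⁻¹ * Real.log (supNorm (T^[n] p)) + Real.log ‖c‖
      rw [iterate_smul hF₀ hF₁, supNorm_smul, norm_pow,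
        Real.log_mul (pow_ne_zero _ (norm_ne_zero_iff.mpr hc))
          (ne_of_gt (supNorm_pos (iterate_ne_zero hnd hp n))),
        Real.log_pow]
      push_cast
      field_simp
      ring
    have h3 := hpt _ hcp
    simp_rw [h2] at h3
    exact tendsto_nhds_unique h3 ((hpt p hp).add tendsto_const_nhds)
  · -- boundedness
    refine ⟨∑' n, b n, ?_⟩
    intro p hp
    have h0 : u 0 p = Real.log (supNorm p) := by
      show ((d:ℝ)^0)⁻¹ * Real.log (supNorm (T^[0] p)) = _
      simp
    have heq : g p - Real.log (supNorm p) = ∑' n, v n p := by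
      rw [hg]; simp only; rw [h0]; ring
    rw [heq, ← Real.norm_eq_abs]
    exact tsum_of_norm_bounded hb_summ.hasSum (fun n => hvb n p hp)
end

section
/- Let K be a commutative ring of prime characteristic p, and let f = X + X^p ∈ K[X]. Then for every integer j ≥ 0, the p^j-fold composition of f with itself equals X + X^{(p^{p^j})}; that is, f^{∘(p^j)}(X) = X + X^{p^{p^j}} as polynomials in K[X]. -/
open Polynomial

private lemma iter_comp_eq {K : Type*} [CommRing K] (h : K[X]) (m : ℕ) (r : K[X]) :
    (fun q : K[X] => q.comp h)^[m] r = r.comp ((fun q : K[X] => q.comp h)^[m] X) := by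
  induction m with
  | zero => simp
  | succ m ih =>
    rw [Function.iterate_succ_apply', Function.iterate_succ_apply', ih, comp_assoc]

private lemma charP_poly {K : Type*} [CommRing K] {p : ℕ} (hp : CharP K p) : CharP K[X] p :=
  charP_of_injective_ringHom (Polynomial.C_injective) p

private lemma charP_end {K : Type*} [CommRing K] {p : ℕ} (hp : CharP K p) :
    CharP (AddMonoid.End K[X]) p := by
  haveI := charP_poly hp
  constructor
  intro n
  constructor
  · intro h
    have := DFunLike.congr_fun h (1 : K[X])
    simp only [AddMonoid.End.natCast_apply, AddMonoid.End.zero_apply, nsmul_eq_mul, mul_one] at this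
    exact (CharP.cast_eq_zero_iff K[X] p n).mp this
  · intro h
    refine AddMonoidHom.ext fun x => ?_
    show (n : AddMonoid.End K[X]) x = 0
    rw [AddMonoid.End.natCast_apply, nsmul_eq_mul, (CharP.cast_eq_zero_iff K[X] p n).mpr h,
      zero_mul]

/-- Over a commutative ring `K` of prime characteristic `p`, the `p^j`-fold composition
of `f = X + X^p` with itself equals `X + X^(p^(p^j))`.  Here the `m`-fold composition of
`g` is `g ∘ g ∘ ⋯ ∘ g` (`m` times), with the `0`-fold composition being `X`. -/
theorem stmt_7 (K : Type*) [CommRing K] (p : ℕ) (hp : p.Prime) [CharP K p] (j : ℕ) :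
    (fun q : Polynomial K => q.comp (X + X ^ p))^[p ^ j] X
      = X + X ^ (p ^ (p ^ j)) := by
  haveI : Fact p.Prime := ⟨hp⟩
  haveI hKX : CharP K[X] p := charP_poly ‹CharP K p›
  haveI hE : CharP (AddMonoid.End K[X]) p := charP_end ‹CharP K p›
  set T : K[X] → K[X] := fun q => q.comp (X + X ^ p) with hT
  set ε : AddMonoid.End K[X] := (frobenius K[X] p).toAddMonoidHom with hε
  have hεapp : ∀ r : K[X], ε r = r ^ p := fun r => rfl
  -- step recurrence
  have hstep : ∀ m : ℕ, T^[m + 1] X = T^[m] X + (T^[m] X) ^ p := by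
    intro m
    have h1 : T X = X + X ^ p := by simp [hT]
    rw [Function.iterate_succ_apply, h1, iter_comp_eq, add_comp, X_comp, X_pow_comp]
  -- identify with powers of (1 + ε)
  have hL3 : ∀ m : ℕ, T^[m] X = ((1 + ε) ^ m) X := by
    intro m
    induction m with
    | zero => simp
    | succ m ih =>
      rw [hstep, ih, pow_succ']
      show _ = (1 + ε) (((1 + ε) ^ m) X)
      rw [show ∀ a b : AddMonoid.End K[X], ∀ y, (a + b) y = a y + b y from fun _ _ _ => rfl,
        AddMonoid.End.one_apply, hεapp]
  have hεpow : ∀ k : ℕ, (ε ^ k) X = X ^ p ^ k := by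
    intro k
    induction k with
    | zero => simp
    | succ k ih =>
      rw [pow_succ']
      show ε ((ε ^ k) X) = _
      rw [ih, hεapp, ← pow_mul, ← pow_succ]
  rw [hL3, add_pow_char_pow_of_commute _ _ (Commute.one_left ε),
    show ∀ a b : AddMonoid.End K[X], ∀ y, (a + b) y = a y + b y from fun _ _ _ => rfl, one_pow, AddMonoid.End.one_apply, hεpow]
end
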